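/- Let C ⊆ F_q^n be a linear [n,k,d] code with parity check matrix H of rank n−k, partitioned into submatrices H_0, H_1, …, H_m (stacked vertically) with rk(H_0) = κ and rk(H_i) ≤ κ for 1 ≤ i ≤ m. If the polynomial matrix G(D) = H̃_0 + H̃_1 D + ⋯ + H̃_m D^m (where H̃_i pads H_i with zero rows to κ rows) is the generator of a convolutional code V and C^⊥ ⊆ C, then V ⊆ V^⊥ (with respect to the Euclidean inner product on F_q[D]^n). -/
import Mathlib


/-- The linear functional `c ↦ ∑ j, v j * c j` on `Fin n → F`. -/
def dotFunctional (F : Type*) [Field F] (n : ℕ) (v : Fin n → F) :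
    (Fin n → F) →ₗ[F] F where
  toFun c := ∑ j : Fin n, v j * c j
  map_add' x y := by simp [mul_add, Finset.sum_add_distrib]
  map_smul' r x := by simp [Finset.mul_sum, mul_left_comm]

/-- The Euclidean inner product on `F_q[D]^n`:
`⟨u(D), v(D)⟩ = ∑_i u_i · v_i` where `u_i, v_i ∈ F^n` are the coefficient vectors. -/
noncomputable def polyInner (F : Type*) [Field F] (n : ℕ)
    (u v : Fin n → Polynomial F) : F :=
  ∑ j : Fin n, (u j).sum fun d a => a * (v j).coeff d

lemma key_bilin {F : Type*} [Field F] {n : ℕ} {ι : Type*} [Fintype ι]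
    (a b : ι → F) (x y : ι → Fin n → F)
    (h : ∀ p q, ∑ j : Fin n, x p j * y q j = 0) :
    ∑ j : Fin n, (∑ p, a p * x p j) * (∑ q, b q * y q j) = 0 := by
  have : ∑ j : Fin n, (∑ p, a p * x p j) * (∑ q, b q * y q j)
      = ∑ p, ∑ q, a q * b p * ∑ j : Fin n, x q j * y p j := by
    simp only [Finset.sum_mul, Finset.mul_sum]
    rw [Finset.sum_comm]
    refine Finset.sum_congr rfl fun p _ => ?_
    rw [Finset.sum_comm]
    refine Finset.sum_congr rfl fun q _ => ?_
    refine Finset.sum_congr rfl fun j _ => ?_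
    ring
  rw [this]
  simp [h]

theorem dual_containing_convolutional (F : Type*) [Field F] (n k κ m : ℕ)
    (H : Fin (m + 1) → Matrix (Fin κ) (Fin n) F)
    (hrk0 : (H 0).rank = κ) (hrk : ∀ i, (H i).rank ≤ κ)
    (C : Submodule F (Fin n → F))
    -- `C` is the code with (stacked) parity check matrix `H_0, …, H_m`
    (hC : C = ⨅ (i : Fin (m + 1)) (r : Fin κ),
        LinearMap.ker (dotFunctional F n (fun j => H i r j)))
    (hk : Module.finrank F C = k)
    -- `C^⊥ ⊆ C`
    (hdual : ∀ u : Fin n → F, (∀ c ∈ C, ∑ j : Fin n, u j * c j = 0) → u ∈ C)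
    -- `V` is the convolutional code generated by `G(D) = ∑_i H̃_i D^i`
    (V : Set (Fin n → Polynomial F))
    (hV : V = {v | ∃ u : Fin κ → Polynomial F, ∀ j : Fin n,
        v j = ∑ r : Fin κ, ∑ i : Fin (m + 1),
          u r * Polynomial.C (H i r j) * Polynomial.X ^ (i : ℕ)}) :
    -- then `V ⊆ V^⊥` for the Euclidean inner product
    ∀ v ∈ V, ∀ w ∈ V, polyInner F n v w = 0 := by
  subst hV
  intro v hv w hw
  obtain ⟨u, hu⟩ := hv
  obtain ⟨u', hu'⟩ := hw
  -- any two rows of the H i are orthogonal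
  have hrow : ∀ (i i' : Fin (m+1)) (r r' : Fin κ),
      ∑ j : Fin n, H i r j * H i' r' j = 0 := by
    intro i i' r r'
    have hmem : (fun j => H i' r' j) ∈ C := by
      apply hdual
      intro c hc
      rw [hC] at hc
      simp only [Submodule.mem_iInf, LinearMap.mem_ker, dotFunctional,
        LinearMap.coe_mk, AddHom.coe_mk] at hc
      exact hc i' r'
    rw [hC] at hmem
    simp only [Submodule.mem_iInf, LinearMap.mem_ker, dotFunctional,
      LinearMap.coe_mk, AddHom.coe_mk] at hmem
    exact hmem i r
  -- coefficients of elements of V are combinations of rows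
  have hcoeff : ∀ (z : Fin n → Polynomial F) (y : Fin κ → Polynomial F),
      (∀ j : Fin n, z j = ∑ r : Fin κ, ∑ i : Fin (m + 1),
          y r * Polynomial.C (H i r j) * Polynomial.X ^ (i : ℕ)) →
      ∀ (d : ℕ) (j : Fin n), (z j).coeff d =
        ∑ p : Fin κ × Fin (m + 1),
          (if ((p.2 : ℕ)) ≤ d then (y p.1).coeff (d - (p.2 : ℕ)) else 0)
            * H p.2 p.1 j := by
    intro z y hz d j
    rw [hz j, Fintype.sum_prod_type]
    rw [Polynomial.finset_sum_coeff]
    refine Finset.sum_congr rfl fun r _ => ?_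
    rw [Polynomial.finset_sum_coeff]
    refine Finset.sum_congr rfl fun i _ => ?_
    rw [Polynomial.coeff_mul_X_pow', Polynomial.coeff_mul_C]
    split_ifs <;> simp
  -- per-degree orthogonality
  have hdeg : ∀ d : ℕ, ∑ j : Fin n, (v j).coeff d * (w j).coeff d = 0 := by
    intro d
    have h1 := hcoeff v u hu d
    have h2 := hcoeff w u' hu' d
    calc ∑ j : Fin n, (v j).coeff d * (w j).coeff d
        = ∑ j : Fin n,
            (∑ p : Fin κ × Fin (m + 1),
              (if ((p.2 : ℕ)) ≤ d then (u p.1).coeff (d - (p.2 : ℕ)) else 0)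
                * H p.2 p.1 j)
          * (∑ q : Fin κ × Fin (m + 1),
              (if ((q.2 : ℕ)) ≤ d then (u' q.1).coeff (d - (q.2 : ℕ)) else 0)
                * H q.2 q.1 j) := by
          refine Finset.sum_congr rfl fun j _ => ?_
          rw [h1 j, h2 j]
      _ = 0 := key_bilin _ _ _ _ (fun p q => hrow p.2 q.2 p.1 q.1)
  -- assemble
  unfold polyInner
  set N : ℕ := (Finset.univ.sup fun j : Fin n => (v j).natDegree) + 1 with hN
  have hlt : ∀ j : Fin n, (v j).natDegree < N := fun j =>
    Nat.lt_succ_of_le (Finset.le_sup (f := fun j : Fin n => (v j).natDegree) (Finset.mem_univ j))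
  have : ∀ j : Fin n, ((v j).sum fun d a => a * (w j).coeff d)
      = ∑ d ∈ Finset.range N, (v j).coeff d * (w j).coeff d := by
    intro j
    exact Polynomial.sum_over_range' (v j) (by simp) N (hlt j)
  simp only [this]
  rw [Finset.sum_comm]
  simp [hdeg]
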